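/- Let k be an odd positive integer and let K be a commuting subgroup of the phase-less Pauli group P̂_k with dim K = k (i.e. |K| = 2^k). Then at least one of the following holds: (1) there exists Q ∈ K whose representative i^ℓ·Q_1⊗⋯⊗Q_k has Q_j ∈ {I, Y} for every j ∈ [k] and the number of j with Q_j = Y is odd; or (2) there exists P ∈ K whose representative i^ℓ·Q_1⊗⋯⊗Q_k has an odd number of indices j with Q_j ∈ {X, Z}. -/

import Mathlib

open Matrix

noncomputable section

/-- The space of `n`-qubit operators (2^n × 2^n complex matrices, indexed by bit strings). -/
abbrev QMat (n : ℕ) := Matrix (Fin n → Fin 2) (Fin n → Fin 2) ℂ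

/-- The space of `n`-qubit state vectors (ℂ^{2^n}, indexed by bit strings). -/
abbrev QVec (n : ℕ) := (Fin n → Fin 2) → ℂ

def PauliX : Matrix (Fin 2) (Fin 2) ℂ := !![0, 1; 1, 0]
def PauliY : Matrix (Fin 2) (Fin 2) ℂ := !![0, -Complex.I; Complex.I, 0]
def PauliZ : Matrix (Fin 2) (Fin 2) ℂ := !![1, 0; 0, -1]

/-- `Q` is one of the four single-qubit Pauli matrices `I, X, Y, Z`. -/
def IsSingleQubitPauli (Q : Matrix (Fin 2) (Fin 2) ℂ) : Prop :=
  Q = 1 ∨ Q = PauliX ∨ Q = PauliY ∨ Q = PauliZ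

/-- Kronecker product, in qubit order, of `n` single-qubit operators. -/
def tensorn (n : ℕ) (Q : Fin n → Matrix (Fin 2) (Fin 2) ℂ) : QMat n :=
  fun x y => ∏ j, Q j (x j) (y j)

/-- `P` is an element of the `n`-qubit Pauli group: `P = i^ℓ · Q_1 ⊗ ⋯ ⊗ Q_n`. -/
def IsPauli {n : ℕ} (P : QMat n) : Prop :=
  ∃ (ℓ : Fin 4) (Q : Fin n → Matrix (Fin 2) (Fin 2) ℂ),
    (∀ j, IsSingleQubitPauli (Q j)) ∧ P = (Complex.I ^ (ℓ : ℕ)) • tensorn n Q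

lemma tensorn_one (n : ℕ) : tensorn n (fun _ => (1 : Matrix (Fin 2) (Fin 2) ℂ)) = 1 := by
  ext x y
  by_cases h : x = y
  · subst h
    simp [tensorn, Matrix.one_apply]
  · have hj : ∃ j, x j ≠ y j := by
      by_contra hc
      push_neg at hc
      exact h (funext hc)
    obtain ⟨j, hj⟩ := hj
    rw [tensorn, Matrix.one_apply]
    rw [if_neg h]
    exact Finset.prod_eq_zero (Finset.mem_univ j) (by simp [Matrix.one_apply, hj])

lemma tensorn_mul {n : ℕ} (Q R : Fin n → Matrix (Fin 2) (Fin 2) ℂ) :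
    tensorn n Q * tensorn n R = tensorn n (fun j => Q j * R j) := by
  ext x y
  simp only [tensorn, Matrix.mul_apply]
  rw [Finset.prod_univ_sum (fun _ => (Finset.univ : Finset (Fin 2)))
    (fun j b => Q j (x j) b * R j b (y j))]
  rw [Fintype.piFinset_univ]
  exact Finset.sum_congr rfl fun z _ => (Finset.prod_mul_distrib).symm

lemma IsSingleQubitPauli.mul_self {Q : Matrix (Fin 2) (Fin 2) ℂ}
    (h : IsSingleQubitPauli Q) : Q * Q = 1 := by
  rcases h with h | h | h | h <;> subst h
  · simp
  · rw [PauliX, Matrix.mul_fin_two, Matrix.one_fin_two]; norm_num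
  · rw [PauliY, Matrix.mul_fin_two, Matrix.one_fin_two]; norm_num [Complex.I_mul_I]
  · rw [PauliZ, Matrix.mul_fin_two, Matrix.one_fin_two]; norm_num

/-- The invertible `n`-qubit operators. -/
abbrev MatU (n : ℕ) := (QMat n)ˣ

/-- The `n`-qubit Pauli group, as a subgroup of the invertible 2^n × 2^n matrices. -/
def PauliGrp (n : ℕ) : Subgroup (MatU n) :=
  Subgroup.closure {u : MatU n | IsPauli (u : QMat n)}

/-- The matrix `i·I` as a unit. -/
def phaseUnit (n : ℕ) : MatU n :=
  Units.map (algebraMap ℂ (QMat n)).toMonoidHom (Units.mk0 Complex.I Complex.I_ne_zero)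

lemma phaseUnit_isPauli (n : ℕ) : IsPauli ((phaseUnit n : MatU n) : QMat n) := by
  refine ⟨1, fun _ => 1, fun _ => Or.inl rfl, ?_⟩
  rw [tensorn_one]
  show algebraMap ℂ (QMat n) Complex.I = _
  rw [Algebra.algebraMap_eq_smul_one]
  norm_num

lemma phaseUnit_mem (n : ℕ) : phaseUnit n ∈ PauliGrp n :=
  Subgroup.subset_closure (phaseUnit_isPauli n)

def phaseElt (n : ℕ) : ↥(PauliGrp n) := ⟨phaseUnit n, phaseUnit_mem n⟩

/-- The subgroup `⟨iI⟩` of the Pauli group. -/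
def phaseSub (n : ℕ) : Subgroup ↥(PauliGrp n) := Subgroup.zpowers (phaseElt n)

lemma phaseUnit_comm {n : ℕ} (g : MatU n) : g * phaseUnit n = phaseUnit n * g := by
  refine Units.ext ?_
  show (g : QMat n) * (algebraMap ℂ (QMat n) Complex.I) =
    (algebraMap ℂ (QMat n) Complex.I) * (g : QMat n)
  exact (Algebra.commutes Complex.I (g : QMat n)).symm

instance phaseSub_normal (n : ℕ) : (phaseSub n).Normal := by
  constructor
  intro h hmem g
  obtain ⟨k, hk⟩ := Subgroup.mem_zpowers_iff.mp hmem
  have hc0 : Commute g (phaseElt n) := Subtype.ext (phaseUnit_comm (g : MatU n))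
  have hc : Commute g h := hk ▸ hc0.zpow_right k
  have hgh : g * h * g⁻¹ = h := by
    rw [hc.eq, mul_assoc, mul_inv_cancel, mul_one]
  rw [hgh]
  exact hmem

/-- The phase-less Pauli group `P̂_n = P_n / ⟨iI⟩`. -/
abbrev PhaselessPauli (n : ℕ) := ↥(PauliGrp n) ⧸ phaseSub n

/-- Two phase-less Pauli operators commute if (any, equivalently every, pair of)
representatives commute as matrices. -/
def PCommute {n : ℕ} (x y : PhaselessPauli n) : Prop :=
  ∃ P Q : ↥(PauliGrp n), QuotientGroup.mk P = x ∧ QuotientGroup.mk Q = y ∧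
    ((P : MatU n) : QMat n) * ((Q : MatU n) : QMat n) =
      ((Q : MatU n) : QMat n) * ((P : MatU n) : QMat n)

/-- A commuting subgroup of the phase-less Pauli group `P̂_n`: all pairs of elements
commute. -/
def IsCommutingSubgroup {n : ℕ} (M : Subgroup (PhaselessPauli n)) : Prop :=
  ∀ x ∈ M, ∀ y ∈ M, PCommute x y

-- ## Auxiliary development

lemma zmod2_cases : ∀ a : ZMod 2, a = 0 ∨ a = 1 := by decide

def Mp (a b : ZMod 2) : Matrix (Fin 2) (Fin 2) ℂ := PauliX ^ a.val * PauliZ ^ b.val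

lemma Mp00 : Mp 0 0 = 1 := by simp [Mp, (by decide : (0 : ZMod 2).val = 0)]
lemma Mp10 : Mp 1 0 = PauliX := by
  simp [Mp, (by decide : (0 : ZMod 2).val = 0), (by decide : (1 : ZMod 2).val = 1)]
lemma Mp01 : Mp 0 1 = PauliZ := by
  simp [Mp, (by decide : (0 : ZMod 2).val = 0), (by decide : (1 : ZMod 2).val = 1)]
lemma Mp11 : Mp 1 1 = PauliX * PauliZ := by
  simp [Mp, (by decide : (1 : ZMod 2).val = 1)]

lemma Mp_mul (a b a' b' : ZMod 2) :
    Mp a b * Mp a' b' = ((-1 : ℂ) ^ ((b * a').val)) • Mp (a + a') (b + b') := by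
  rcases zmod2_cases a with rfl | rfl <;> rcases zmod2_cases b with rfl | rfl <;>
    rcases zmod2_cases a' with rfl | rfl <;> rcases zmod2_cases b' with rfl | rfl <;>
  simp only [(by decide : (1 : ZMod 2) + 1 = 0), (by decide : (1 : ZMod 2) * 1 = 1),
      add_zero, zero_add, mul_zero, zero_mul, mul_one, one_mul,
      (by decide : (0 : ZMod 2).val = 0), (by decide : (1 : ZMod 2).val = 1),
      Mp00, Mp10, Mp01, Mp11, pow_zero, pow_one, one_smul] <;>
  · ext i j
    fin_cases i <;> fin_cases j <;>
      simp [PauliX, PauliZ, Matrix.mul_apply, Fin.sum_univ_succ, Matrix.one_apply]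

lemma Mp_trace (a b : ZMod 2) : (Mp a b).trace = if a = 0 ∧ b = 0 then 2 else 0 := by
  rcases zmod2_cases a with rfl | rfl <;> rcases zmod2_cases b with rfl | rfl <;>
    simp [Mp00, Mp10, Mp01, Mp11, PauliX, PauliZ, Matrix.trace_fin_two,
      Matrix.mul_apply, Fin.sum_univ_succ]

lemma tensorn_smul {n : ℕ} (c : Fin n → ℂ) (Q : Fin n → Matrix (Fin 2) (Fin 2) ℂ) :
    tensorn n (fun j => c j • Q j) = (∏ j, c j) • tensorn n Q := by
  ext x y
  simp [tensorn, Finset.prod_mul_distrib]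

lemma trace_tensorn {n : ℕ} (Q : Fin n → Matrix (Fin 2) (Fin 2) ℂ) :
    (tensorn n Q).trace = ∏ j, (Q j).trace := by
  simp only [Matrix.trace, Matrix.diag, tensorn]
  rw [Finset.prod_univ_sum (fun _ => (Finset.univ : Finset (Fin 2))) (fun j b => Q j b b)]
  rw [Fintype.piFinset_univ]

abbrev Vsp (n : ℕ) := (Fin n → ZMod 2) × (Fin n → ZMod 2)

def Tf {n : ℕ} (v : Vsp n) : QMat n := tensorn n (fun j => Mp (v.1 j) (v.2 j))

def nn {n : ℕ} (v w : Vsp n) : ℕ := ∑ j, ((v.2 j) * (w.1 j)).val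

lemma zmod2_add_self (a : ZMod 2) : a + a = 0 := by revert a; decide

lemma vsp_add_self {n : ℕ} (v : Vsp n) : v + v = 0 :=
  Prod.ext (funext fun _ => zmod2_add_self _) (funext fun _ => zmod2_add_self _)

lemma Tf_mul {n : ℕ} (v w : Vsp n) :
    Tf v * Tf w = ((-1 : ℂ) ^ (nn v w)) • Tf (v + w) := by
  rw [Tf, Tf, tensorn_mul]
  have : (fun j => Mp (v.1 j) (v.2 j) * Mp (w.1 j) (w.2 j)) =
      fun j => ((-1 : ℂ) ^ ((v.2 j * w.1 j).val)) • Mp (v.1 j + w.1 j) (v.2 j + w.2 j) :=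
    funext fun j => Mp_mul _ _ _ _
  rw [this, tensorn_smul, Finset.prod_pow_eq_pow_sum]
  rfl

lemma Tf_zero {n : ℕ} : Tf (0 : Vsp n) = 1 := by
  have : (fun j => Mp ((0 : Vsp n).1 j) ((0 : Vsp n).2 j)) =
      fun _ : Fin n => (1 : Matrix (Fin 2) (Fin 2) ℂ) := funext fun j => Mp00
  rw [Tf, this, tensorn_one]

lemma Tf_sq {n : ℕ} (v : Vsp n) : Tf v * Tf v = ((-1 : ℂ) ^ (nn v v)) • 1 := by
  rw [Tf_mul, vsp_add_self, Tf_zero]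

lemma Tf_ne_zero {n : ℕ} (v : Vsp n) : Tf v ≠ 0 := by
  intro h
  have h2 := Tf_sq v
  rw [h, zero_mul] at h2
  have := congrFun (congrFun h2.symm (fun _ => 0)) (fun _ => 0)
  simp [Matrix.one_apply] at this

lemma trace_Tf {n : ℕ} (v : Vsp n) (hv : v ≠ 0) : (Tf v).trace = 0 := by
  have hj : ∃ j, v.1 j ≠ 0 ∨ v.2 j ≠ 0 := by
    by_contra hc
    push_neg at hc
    exact hv (Prod.ext (funext fun j => (hc j).1) (funext fun j => (hc j).2))
  obtain ⟨j, hj⟩ := hj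
  rw [Tf, trace_tensorn]
  refine Finset.prod_eq_zero (Finset.mem_univ j) ?_
  rw [Mp_trace, if_neg]
  tauto

lemma smul_Tf_cancel {n : ℕ} {c c' : ℂ} {v : Vsp n} (h : c • Tf v = c' • Tf v) : c = c' := by
  by_contra hne
  have : (c - c') • Tf v = 0 := by rw [sub_smul, h, sub_self]
  rcases smul_eq_zero.mp this with h' | h'
  · exact hne (sub_eq_zero.mp h')
  · exact Tf_ne_zero v h'

lemma Tf_inj {n : ℕ} {c c' : ℂ} {v w : Vsp n} (hc : c ≠ 0)
    (h : c • Tf v = c' • Tf w) : v = w ∧ c = c' := by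
  have hvw : v = w := by
    by_contra hvw
    have h2 : (c • Tf v) * Tf w = (c' • Tf w) * Tf w := by rw [h]
    rw [smul_mul_assoc, smul_mul_assoc, Tf_mul, Tf_mul, vsp_add_self, Tf_zero] at h2
    have htr := congrArg Matrix.trace h2
    have hvw0 : v + w ≠ 0 := by
      intro h0
      apply hvw
      have := congrArg (· + w) h0
      simpa [add_assoc, vsp_add_self] using this
    rw [Matrix.trace_smul, Matrix.trace_smul, Matrix.trace_smul, Matrix.trace_smul,
      trace_Tf _ hvw0, Matrix.trace_one] at htr
    simp only [smul_eq_mul, mul_zero] at htr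
    have hcard : (Fintype.card (Fin n → Fin 2) : ℂ) ≠ 0 :=
      Nat.cast_ne_zero.mpr Fintype.card_ne_zero
    have hx : ((-1 : ℂ) ^ (nn w w) * (Fintype.card (Fin n → Fin 2) : ℂ)) ≠ 0 :=
      mul_ne_zero (pow_ne_zero _ (by norm_num)) hcard
    have hc'0 : c' = 0 := by
      rcases mul_eq_zero.mp htr.symm with h1 | h1
      · exact h1
      · exact absurd h1 hx
    rw [hc'0, zero_smul] at h
    rcases smul_eq_zero.mp h with h' | h'
    · exact hc h'
    · exact Tf_ne_zero v h'
  subst hvw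
  exact ⟨rfl, smul_Tf_cancel h⟩

lemma neg_one_pow_eq_cast {m m' : ℕ} (h : (-1 : ℂ) ^ m = (-1 : ℂ) ^ m') :
    ((m : ZMod 2) = (m' : ZMod 2)) := by
  have : ∀ p : ℕ, ((-1 : ℂ)) ^ p = if (p : ZMod 2) = 0 then 1 else -1 := by
    intro p
    rcases Nat.even_or_odd p with hp | hp
    · rw [hp.neg_one_pow, if_pos]
      exact (ZMod.natCast_eq_zero_iff p 2).mpr hp.two_dvd
    · rw [hp.neg_one_pow, if_neg]
      intro h0
      have := (ZMod.natCast_eq_zero_iff p 2).mp h0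
      rw [Nat.odd_iff] at hp
      omega
  rw [this, this] at h
  rcases zmod2_cases (m : ZMod 2) with h1 | h1 <;> rcases zmod2_cases (m' : ZMod 2) with h2 | h2 <;>
    rw [h1, h2] <;> rw [h1, h2] at h <;> norm_num at h

-- ## Fourth roots of unity
lemma fourth_root_ne_zero {c : ℂ} (h : c ^ 4 = 1) : c ≠ 0 := by
  intro h0; rw [h0] at h; norm_num at h

lemma fourth_root_exists {c : ℂ} (h : c ^ 4 = 1) : ∃ ℓ : Fin 4, c = Complex.I ^ (ℓ : ℕ) := by
  have h4 : (c - 1) * (c + 1) * (c - Complex.I) * (c + Complex.I) = 0 := by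
    linear_combination h - (c ^ 2 - 1) * Complex.I_sq
  have hI3 : Complex.I ^ (3 : ℕ) = -Complex.I := by
    rw [pow_succ, Complex.I_sq]; ring
  rcases mul_eq_zero.mp h4 with h' | h'
  · rcases mul_eq_zero.mp h' with h'' | h''
    · rcases mul_eq_zero.mp h'' with h3 | h3
      · exact ⟨0, by rw [sub_eq_zero.mp h3]; norm_num⟩
      · refine ⟨2, ?_⟩
        rw [eq_neg_of_add_eq_zero_left h3]
        rw [show ((2 : Fin 4) : ℕ) = 2 from rfl, Complex.I_sq]
    · exact ⟨1, by rw [sub_eq_zero.mp h'']; norm_num⟩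
  · refine ⟨3, ?_⟩
    rw [eq_neg_of_add_eq_zero_left h', show ((3 : Fin 4) : ℕ) = 3 from rfl, hI3]

lemma fourth_root_pow (ℓ : Fin 4) : (Complex.I ^ (ℓ : ℕ)) ^ 4 = 1 := by
  rw [← pow_mul, mul_comm, pow_mul, Complex.I_pow_four, one_pow]

-- ## Single-qubit Paulis vs Mp
lemma pauliY_eq : PauliY = Complex.I • Mp 1 1 := by
  rw [Mp11]
  ext i j
  fin_cases i <;> fin_cases j <;>
    simp [PauliX, PauliY, PauliZ, Matrix.mul_apply, Fin.sum_univ_succ]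

lemma Mp11_eq : Mp 1 1 = (-Complex.I) • PauliY := by
  rw [pauliY_eq, smul_smul]
  norm_num [Complex.I_mul_I]

lemma pauli_eq_smul_Mp {Q : Matrix (Fin 2) (Fin 2) ℂ} (h : IsSingleQubitPauli Q) :
    ∃ (c : ℂ) (a b : ZMod 2), c ^ 4 = 1 ∧ Q = c • Mp a b := by
  rcases h with rfl | rfl | rfl | rfl
  · exact ⟨1, 0, 0, by norm_num, by rw [Mp00, one_smul]⟩
  · exact ⟨1, 1, 0, by norm_num, by rw [Mp10, one_smul]⟩
  · exact ⟨Complex.I, 1, 1, Complex.I_pow_four, pauliY_eq⟩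
  · exact ⟨1, 0, 1, by norm_num, by rw [Mp01, one_smul]⟩

lemma Mp_eq_smul_pauli (a b : ZMod 2) :
    ∃ (c : ℂ) (Q : Matrix (Fin 2) (Fin 2) ℂ),
      c ^ 4 = 1 ∧ IsSingleQubitPauli Q ∧ Mp a b = c • Q := by
  rcases zmod2_cases a with rfl | rfl <;> rcases zmod2_cases b with rfl | rfl
  · exact ⟨1, 1, by norm_num, Or.inl rfl, by rw [Mp00, one_smul]⟩
  · exact ⟨1, PauliZ, by norm_num, Or.inr (Or.inr (Or.inr rfl)), by rw [Mp01, one_smul]⟩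
  · exact ⟨1, PauliX, by norm_num, Or.inr (Or.inl rfl), by rw [Mp10, one_smul]⟩
  · exact ⟨-Complex.I, PauliY,
      by rw [show ((-Complex.I) ^ 4) = Complex.I ^ 4 by ring, Complex.I_pow_four],
      Or.inr (Or.inr (Or.inl rfl)), Mp11_eq⟩

-- ## Pauli matrices are exactly fourth-root multiples of Tf
lemma isPauli_iff_smul_Tf {n : ℕ} {P : QMat n} :
    IsPauli P ↔ ∃ (c : ℂ) (v : Vsp n), c ^ 4 = 1 ∧ P = c • Tf v := by
  constructor
  · rintro ⟨ℓ, Q, hQ, rfl⟩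
    choose c a b hc hQeq using fun j => pauli_eq_smul_Mp (hQ j)
    refine ⟨Complex.I ^ (ℓ : ℕ) * ∏ j, c j, (a, b), ?_, ?_⟩
    · rw [mul_pow, fourth_root_pow, one_mul, ← Finset.prod_pow]
      exact Finset.prod_eq_one fun j _ => hc j
    · have : Q = fun j => c j • Mp (a j) (b j) := funext hQeq
      rw [this, tensorn_smul, Tf, smul_smul]
  · rintro ⟨c, v, hc, rfl⟩
    choose d Q hd hQ hMp using fun j => Mp_eq_smul_pauli (v.1 j) (v.2 j)
    obtain ⟨ℓ, hℓ⟩ := fourth_root_exists (show (c * ∏ j, d j) ^ 4 = 1 by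
      rw [mul_pow, hc, one_mul, ← Finset.prod_pow]
      exact Finset.prod_eq_one fun j _ => hd j)
    refine ⟨ℓ, Q, hQ, ?_⟩
    have : (fun j => Mp (v.1 j) (v.2 j)) = fun j => d j • Q j := funext hMp
    rw [Tf, this, tensorn_smul, smul_smul, ← hℓ]

-- ## The subgroup of units of the form c • Tf v
def TfSub (n : ℕ) : Subgroup (MatU n) where
  carrier := {u | ∃ (c : ℂ) (v : Vsp n), c ^ 4 = 1 ∧ (u : QMat n) = c • Tf v}
  one_mem' := ⟨1, 0, by norm_num, by rw [Tf_zero, one_smul]; rfl⟩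
  mul_mem' := by
    rintro u u' ⟨c, v, hc, hu⟩ ⟨c', w, hc', hu'⟩
    refine ⟨c * c' * (-1) ^ (nn v w), v + w, ?_, ?_⟩
    · rw [mul_pow, mul_pow, hc, hc', ← pow_mul, mul_comm (nn v w), pow_mul]
      norm_num
    · show (u : QMat n) * (u' : QMat n) = _
      rw [hu, hu', smul_mul_assoc, mul_smul_comm, Tf_mul, smul_smul, smul_smul]
  inv_mem' := by
    rintro u ⟨c, v, hc, hu⟩
    have hinv : (u : QMat n) * ((c⁻¹ * (-1) ^ (nn v v)) • Tf v) = 1 := by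
      rw [hu, smul_mul_assoc, mul_smul_comm, Tf_sq, smul_smul, smul_smul]
      have hsc : c * (c⁻¹ * (-1) ^ nn v v) * (-1) ^ nn v v = 1 := by
        have h1 : ((-1 : ℂ)) ^ nn v v * (-1) ^ nn v v = 1 := by
          rw [← pow_add]; exact Even.neg_one_pow ⟨nn v v, rfl⟩
        calc c * (c⁻¹ * (-1) ^ nn v v) * (-1) ^ nn v v
            = (c * c⁻¹) * ((-1) ^ nn v v * (-1) ^ nn v v) := by ring
          _ = 1 := by rw [h1, mul_inv_cancel₀ (fourth_root_ne_zero hc), mul_one]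
      rw [hsc, one_smul]
    refine ⟨c⁻¹ * (-1) ^ (nn v v), v, ?_, Units.inv_eq_of_mul_eq_one_right hinv⟩
    rw [mul_pow, inv_pow, hc, inv_one, one_mul, ← pow_mul, mul_comm (nn v v), pow_mul]
    norm_num

lemma pauliGrp_le_TfSub (n : ℕ) : PauliGrp n ≤ TfSub n := by
  apply Subgroup.closure_le (TfSub n) |>.mpr
  intro u hu
  exact isPauli_iff_smul_Tf.mp hu

lemma pauli_elem_form {n : ℕ} (u : ↥(PauliGrp n)) :
    ∃ (c : ℂ) (v : Vsp n), c ^ 4 = 1 ∧ ((u : MatU n) : QMat n) = c • Tf v :=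
  pauliGrp_le_TfSub n u.2

-- ## The label map
def labelU {n : ℕ} (u : ↥(PauliGrp n)) : Vsp n :=
  Classical.choose (Classical.choose_spec (pauli_elem_form u))

lemma labelU_spec {n : ℕ} (u : ↥(PauliGrp n)) :
    ∃ c : ℂ, c ^ 4 = 1 ∧ ((u : MatU n) : QMat n) = c • Tf (labelU u) := by
  exact ⟨Classical.choose (pauli_elem_form u),
    Classical.choose_spec (Classical.choose_spec (pauli_elem_form u))⟩

lemma labelU_eq {n : ℕ} {u : ↥(PauliGrp n)} {c : ℂ} {v : Vsp n} (hc : c ≠ 0)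
    (h : ((u : MatU n) : QMat n) = c • Tf v) : labelU u = v := by
  obtain ⟨c', hc', heq⟩ := labelU_spec u
  exact (Tf_inj (fourth_root_ne_zero hc') (heq.symm.trans h)).1

lemma labelU_mul {n : ℕ} (u u' : ↥(PauliGrp n)) :
    labelU (u * u') = labelU u + labelU u' := by
  obtain ⟨c, hc, heq⟩ := labelU_spec u
  obtain ⟨c', hc', heq'⟩ := labelU_spec u'
  have hcoe : (((u * u' : ↥(PauliGrp n)) : MatU n) : QMat n) =
      ((u : MatU n) : QMat n) * ((u' : MatU n) : QMat n) := rfl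
  refine labelU_eq (c := c * c' * ((-1) ^ (nn (labelU u) (labelU u')))) ?_ ?_
  · exact mul_ne_zero (mul_ne_zero (fourth_root_ne_zero hc) (fourth_root_ne_zero hc'))
      (pow_ne_zero _ (by norm_num : (-1 : ℂ) ≠ 0))
  · rw [hcoe, heq, heq', smul_mul_assoc, mul_smul_comm, Tf_mul, smul_smul, smul_smul]

lemma phase_zpow_coe {n : ℕ} (m : ℤ) :
    ((((phaseElt n) ^ m : ↥(PauliGrp n)) : MatU n) : QMat n) = (Complex.I ^ m) • 1 := by
  have h1 : (((phaseElt n) ^ m : ↥(PauliGrp n)) : MatU n) = (phaseUnit n) ^ m := rfl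
  rw [h1, phaseUnit]
  rw [← map_zpow]
  show algebraMap ℂ (QMat n) ((Units.mk0 Complex.I Complex.I_ne_zero ^ m : ℂˣ) : ℂ) = _
  rw [Units.val_zpow_eq_zpow_val, Units.val_mk0, Algebra.algebraMap_eq_smul_one]

lemma labelU_const {n : ℕ} (u u' : ↥(PauliGrp n))
    (h : (QuotientGroup.mk u : PhaselessPauli n) = QuotientGroup.mk u') :
    labelU u = labelU u' := by
  have hrel := QuotientGroup.eq.mp h
  obtain ⟨m, hm⟩ := Subgroup.mem_zpowers_iff.mp hrel
  have hu' : u' = u * (phaseElt n) ^ m := by rw [hm]; group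
  obtain ⟨c, hc, heq⟩ := labelU_spec u
  have : ((u' : MatU n) : QMat n) = (c * Complex.I ^ m) • Tf (labelU u) := by
    rw [hu']
    show ((u : MatU n) : QMat n) * ((((phaseElt n) ^ m : ↥(PauliGrp n)) : MatU n) : QMat n) = _
    rw [phase_zpow_coe, heq, smul_mul_assoc, mul_smul_comm, mul_one, smul_smul]
  exact (labelU_eq (mul_ne_zero (fourth_root_ne_zero hc)
    (zpow_ne_zero _ Complex.I_ne_zero)) this).symm ▸ rfl

def plabel {n : ℕ} (x : PhaselessPauli n) : Vsp n :=
  Quotient.liftOn' x labelU (fun a b hab => labelU_const a b (Quotient.sound' hab))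

lemma plabel_mk {n : ℕ} (u : ↥(PauliGrp n)) :
    plabel (QuotientGroup.mk u : PhaselessPauli n) = labelU u := rfl

lemma plabel_mul {n : ℕ} (x y : PhaselessPauli n) :
    plabel (x * y) = plabel x + plabel y := by
  obtain ⟨u, rfl⟩ := QuotientGroup.mk_surjective x
  obtain ⟨u', rfl⟩ := QuotientGroup.mk_surjective y
  rw [← QuotientGroup.mk_mul, plabel_mk, plabel_mk, plabel_mk, labelU_mul]

lemma plabel_one {n : ℕ} : plabel (1 : PhaselessPauli n) = 0 := by
  have h1 : (1 : PhaselessPauli n) = QuotientGroup.mk 1 := rfl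
  rw [h1, plabel_mk]
  refine labelU_eq one_ne_zero ?_
  rw [Tf_zero, one_smul]
  rfl

lemma plabel_injective {n : ℕ} : Function.Injective (plabel (n := n)) := by
  intro x y h
  obtain ⟨u, rfl⟩ := QuotientGroup.mk_surjective x
  obtain ⟨u', rfl⟩ := QuotientGroup.mk_surjective y
  rw [plabel_mk, plabel_mk] at h
  obtain ⟨c, hc, heq⟩ := labelU_spec u
  obtain ⟨c', hc', heq'⟩ := labelU_spec u'
  rw [h] at heq
  have hr : (c' / c) ^ 4 = 1 := by
    rw [div_pow, hc, hc', div_one]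
  obtain ⟨ℓ, hℓ⟩ := fourth_root_exists hr
  have hcc : c' = c * Complex.I ^ (ℓ : ℕ) := by
    rw [div_eq_iff (fourth_root_ne_zero hc)] at hℓ
    rw [hℓ]; ring
  have hcoe : ((u' : MatU n) : QMat n) =
      (((u * (phaseElt n) ^ ((ℓ : ℕ) : ℤ) : ↥(PauliGrp n)) : MatU n) : QMat n) := by
    show _ = ((u : MatU n) : QMat n) * ((((phaseElt n) ^ ((ℓ : ℕ) : ℤ) : ↥(PauliGrp n)) : MatU n) : QMat n)
    rw [phase_zpow_coe, heq', heq, hcc, smul_mul_assoc, mul_smul_comm, mul_one, smul_smul]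
    rw [zpow_natCast]
  have huu : u' = u * (phaseElt n) ^ ((ℓ : ℕ) : ℤ) := Subtype.ext (Units.ext hcoe)
  rw [huu, QuotientGroup.mk_mul_of_mem]
  exact Subgroup.zpow_mem_zpowers _ _

-- ## The symplectic form
lemma cast_nn {n : ℕ} (v w : Vsp n) :
    ((nn v w : ℕ) : ZMod 2) = ∑ j, v.2 j * w.1 j := by
  rw [nn, Nat.cast_sum]
  exact Finset.sum_congr rfl fun j _ => ZMod.natCast_zmod_val _

def Bform (n : ℕ) : LinearMap.BilinForm (ZMod 2) (Vsp n) :=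
  LinearMap.mk₂ (ZMod 2) (fun v w => ∑ j, (v.1 j * w.2 j + v.2 j * w.1 j))
    (fun v v' w => by
      rw [← Finset.sum_add_distrib]
      refine Finset.sum_congr rfl fun j _ => ?_
      show (v.1 j + v'.1 j) * w.2 j + (v.2 j + v'.2 j) * w.1 j = _
      ring)
    (fun c v w => by
      rw [Finset.smul_sum]
      refine Finset.sum_congr rfl fun j _ => ?_
      show c * v.1 j * w.2 j + c * v.2 j * w.1 j = c • (v.1 j * w.2 j + v.2 j * w.1 j)
      rw [smul_eq_mul]; ring)
    (fun v w w' => by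
      rw [← Finset.sum_add_distrib]
      refine Finset.sum_congr rfl fun j _ => ?_
      show v.1 j * (w.2 j + w'.2 j) + v.2 j * (w.1 j + w'.1 j) = _
      ring)
    (fun c v w => by
      rw [Finset.smul_sum]
      refine Finset.sum_congr rfl fun j _ => ?_
      show v.1 j * (c * w.2 j) + v.2 j * (c * w.1 j) = c • (v.1 j * w.2 j + v.2 j * w.1 j)
      rw [smul_eq_mul]; ring)

lemma Bform_apply {n : ℕ} (v w : Vsp n) :
    Bform n v w = ∑ j, (v.1 j * w.2 j + v.2 j * w.1 j) := rfl

lemma Bform_symm {n : ℕ} (v w : Vsp n) : Bform n v w = Bform n w v := by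
  rw [Bform_apply, Bform_apply]
  exact Finset.sum_congr rfl fun j _ => by ring

lemma Bform_isRefl (n : ℕ) : (Bform n).IsRefl := fun v w h => by rw [Bform_symm]; exact h

lemma Bform_nondegenerate (n : ℕ) : (Bform n).Nondegenerate := by
  refine (LinearMap.IsRefl.nondegenerate_iff_separatingLeft (Bform_isRefl n)).mpr ?_
  intro v hv
  have h1 : ∀ j, v.1 j = 0 := by
    intro j
    have := hv (0, Pi.single j 1)
    simpa [Bform_apply, Pi.single_apply, mul_ite, Finset.sum_ite_eq] using this
  have h2 : ∀ j, v.2 j = 0 := by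
    intro j
    have := hv (Pi.single j 1, 0)
    simpa [Bform_apply, Pi.single_apply, mul_ite, Finset.sum_ite_eq] using this
  exact Prod.ext (funext h1) (funext h2)

lemma commute_Bform {n : ℕ} {c c' : ℂ} {v w : Vsp n} (hc : c ≠ 0) (hc' : c' ≠ 0)
    (h : (c • Tf v) * (c' • Tf w) = (c' • Tf w) * (c • Tf v)) : Bform n v w = 0 := by
  rw [smul_mul_assoc, mul_smul_comm, Tf_mul, smul_smul, smul_smul,
    smul_mul_assoc, mul_smul_comm, Tf_mul, smul_smul, smul_smul, add_comm w v] at h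
  have hsc := smul_Tf_cancel h
  have h2 : (c * c') * (-1 : ℂ) ^ (nn v w) = (c * c') * (-1) ^ (nn w v) := by
    linear_combination hsc
  have h3 := mul_left_cancel₀ (mul_ne_zero hc hc') h2
  have h4 := neg_one_pow_eq_cast h3
  rw [Bform_apply]
  have e1 : ∑ j, (v.1 j * w.2 j + v.2 j * w.1 j) =
      (∑ j, w.2 j * v.1 j) + ∑ j, v.2 j * w.1 j := by
    rw [← Finset.sum_add_distrib]
    exact Finset.sum_congr rfl fun j _ => by ring
  rw [e1, ← cast_nn, ← cast_nn, ← h4, ← Nat.cast_add]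
  rw [(ZMod.natCast_eq_zero_iff _ 2).mpr ⟨nn v w, by ring⟩]

-- ## Explicit Pauli of a label
def pauliOf (a b : ZMod 2) : Matrix (Fin 2) (Fin 2) ℂ :=
  if a = 0 then (if b = 0 then 1 else PauliZ) else (if b = 0 then PauliX else PauliY)

def phOf (a b : ZMod 2) : ℂ := if a = 0 ∨ b = 0 then 1 else -Complex.I

lemma phOf_pow (a b : ZMod 2) : (phOf a b) ^ 4 = 1 := by
  rw [phOf]
  split
  · norm_num
  · rw [show ((-Complex.I) ^ 4) = Complex.I ^ 4 by ring, Complex.I_pow_four]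

lemma phOf_ne_zero (a b : ZMod 2) : phOf a b ≠ 0 := fourth_root_ne_zero (phOf_pow a b)

lemma pauliOf_isPauli (a b : ZMod 2) : IsSingleQubitPauli (pauliOf a b) := by
  rcases zmod2_cases a with rfl | rfl <;> rcases zmod2_cases b with rfl | rfl <;>
    simp [pauliOf, IsSingleQubitPauli]

lemma Mp_eq_phOf_smul (a b : ZMod 2) : Mp a b = phOf a b • pauliOf a b := by
  rcases zmod2_cases a with rfl | rfl <;> rcases zmod2_cases b with rfl | rfl <;>
    simp [pauliOf, phOf, Mp00, Mp01, Mp10, Mp11_eq]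

lemma one_ne_pauliX : (1 : Matrix (Fin 2) (Fin 2) ℂ) ≠ PauliX := by
  intro h
  have := congrFun (congrFun h 0) 0
  simp [PauliX, Matrix.one_apply] at this

lemma one_ne_pauliZ : (1 : Matrix (Fin 2) (Fin 2) ℂ) ≠ PauliZ := by
  intro h
  have := congrFun (congrFun h 1) 1
  simp [PauliZ, Matrix.one_apply] at this
  norm_num at this

lemma pauliY_ne_pauliX : PauliY ≠ PauliX := by
  intro h
  have := congrFun (congrFun h 0) 1
  simp [PauliX, PauliY] at this
  rw [Complex.ext_iff] at this
  norm_num at this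

lemma pauliY_ne_pauliZ : PauliY ≠ PauliZ := by
  intro h
  have := congrFun (congrFun h 0) 0
  norm_num [PauliZ, PauliY] at this

lemma pauliOf_XZ_iff (a b : ZMod 2) :
    (pauliOf a b = PauliX ∨ pauliOf a b = PauliZ) ↔ a + b = 1 := by
  rcases zmod2_cases a with rfl | rfl <;> rcases zmod2_cases b with rfl | rfl <;>
    simp [pauliOf, one_ne_pauliX, one_ne_pauliZ, pauliY_ne_pauliX, pauliY_ne_pauliZ] <;>
    decide

-- ## Parity counting
lemma odd_card_of_sum_one {n : ℕ} (g : Fin n → ZMod 2) (h : ∑ j, g j = 1) :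
    Odd (Finset.univ.filter (fun j => g j = 1)).card := by
  rw [← Finset.sum_filter_of_ne (p := fun j => g j = 1)
    (fun x _ hx => (zmod2_cases (g x)).resolve_left hx)] at h
  rw [Finset.sum_congr rfl (fun x hx => (Finset.mem_filter.mp hx).2)] at h
  rw [Finset.sum_const, nsmul_eq_mul, mul_one] at h
  rcases Nat.even_or_odd (Finset.univ.filter (fun j => g j = 1)).card with he | ho
  · exfalso
    rw [(ZMod.natCast_eq_zero_iff _ 2).mpr he.two_dvd] at h
    exact absurd h (by decide)
  · exact ho

/-- a maximal commuting subgroup `K ≤ P̂_k` (with `|K| = 2^k`, `k` odd)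
contains either an element whose factors lie in `{I, Y}` with an odd number of `Y`'s, or
an element with an odd total number of `X`'s and `Z`'s. -/
theorem maximal_commuting_subgroup_odd (k : ℕ) (hk : Odd k) (hk0 : 0 < k)
    (K : Subgroup (PhaselessPauli k)) (hcomm : IsCommutingSubgroup K)
    (hcard : Nat.card K = 2 ^ k) :
    (∃ Q ∈ K, ∃ P : ↥(PauliGrp k), QuotientGroup.mk P = Q ∧
      ∃ (ℓ : Fin 4) (F : Fin k → Matrix (Fin 2) (Fin 2) ℂ),
        (∀ j, IsSingleQubitPauli (F j)) ∧
        ((P : MatU k) : QMat k) = (Complex.I ^ (ℓ : ℕ)) • tensorn k F ∧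
        (∀ j, F j = 1 ∨ F j = PauliY) ∧
        Odd (Set.ncard {j : Fin k | F j = PauliY})) ∨
    (∃ Q ∈ K, ∃ P : ↥(PauliGrp k), QuotientGroup.mk P = Q ∧
      ∃ (ℓ : Fin 4) (F : Fin k → Matrix (Fin 2) (Fin 2) ℂ),
        (∀ j, IsSingleQubitPauli (F j)) ∧
        ((P : MatU k) : QMat k) = (Complex.I ^ (ℓ : ℕ)) • tensorn k F ∧
        Odd (Set.ncard {j : Fin k | F j = PauliX ∨ F j = PauliZ})) := by
  haveI : Fact (Nat.Prime 2) := ⟨Nat.prime_two⟩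
  classical
  set S : Set (Vsp k) := plabel '' (K : Set (PhaselessPauli k)) with hS
  have hzero : (0 : Vsp k) ∈ S := ⟨1, K.one_mem, plabel_one⟩
  have hadd : ∀ w1 ∈ S, ∀ w2 ∈ S, w1 + w2 ∈ S := by
    rintro _ ⟨x, hx, rfl⟩ _ ⟨y, hy, rfl⟩
    exact ⟨x * y, K.mul_mem hx hy, plabel_mul x y⟩
  let W : Submodule (ZMod 2) (Vsp k) :=
    { carrier := S
      add_mem' := fun {a b} ha hb => hadd a ha b hb
      zero_mem' := hzero
      smul_mem' := by
        intro c w hw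
        rcases zmod2_cases c with rfl | rfl
        · rw [zero_smul]; exact hzero
        · rw [one_smul]; exact hw }
  have hmemW : ∀ w, w ∈ W ↔ w ∈ S := fun w => Iff.rfl
  have hiso : ∀ w1 ∈ W, ∀ w2 ∈ W, Bform k w1 w2 = 0 := by
    rintro _ ⟨x, hx, rfl⟩ _ ⟨y, hy, rfl⟩
    obtain ⟨P, Q, hP, hQ, hPQ⟩ := hcomm x hx y hy
    obtain ⟨c, hc, heq⟩ := labelU_spec P
    obtain ⟨c', hc', heq'⟩ := labelU_spec Q
    have hPx : labelU P = plabel x := by rw [← hP, plabel_mk]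
    have hQy : labelU Q = plabel y := by rw [← hQ, plabel_mk]
    rw [← hPx, ← hQy]
    refine commute_Bform (fourth_root_ne_zero hc) (fourth_root_ne_zero hc') ?_
    rw [← heq, ← heq']
    exact hPQ
  haveI hfd : FiniteDimensional (ZMod 2) (Vsp k) := inferInstance
  have hV : Module.finrank (ZMod 2) (Vsp k) = 2 * k := by
    rw [Module.finrank_prod, Module.finrank_pi, Fintype.card_fin]
    omega
  have hcardW : Nat.card ↥W = 2 ^ k := by
    have h1 : Nat.card ↥W = Nat.card ↥S := rfl
    rw [h1, hS, Nat.card_image_of_injective plabel_injective]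
    exact hcard
  haveI : Fintype ↥W := Fintype.ofFinite _
  have hfW : Module.finrank (ZMod 2) ↥W = k := by
    have hc1 : Fintype.card ↥W = 2 ^ (Module.finrank (ZMod 2) ↥W) := by
      have := Module.card_eq_pow_finrank (K := ZMod 2) (V := ↥W)
      rwa [ZMod.card] at this
    have hc2 : Fintype.card ↥W = 2 ^ k := by rw [← Nat.card_eq_fintype_card, hcardW]
    exact Nat.pow_right_injective (le_refl 2) (hc1.symm.trans hc2)
  by_cases hodd : ∃ x ∈ K, ∑ j, ((plabel x).1 j + (plabel x).2 j) = 1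
  · right
    obtain ⟨x, hx, hsum⟩ := hodd
    obtain ⟨P, hP⟩ := QuotientGroup.mk_surjective x
    obtain ⟨c, hc, heq⟩ := labelU_spec P
    set v := labelU P with hv
    have hvx : v = plabel x := by rw [hv, ← hP, plabel_mk]
    have hTf : Tf v = (∏ j, phOf (v.1 j) (v.2 j)) • tensorn k (fun j => pauliOf (v.1 j) (v.2 j)) := by
      rw [Tf]
      have h2 : (fun j => Mp (v.1 j) (v.2 j)) =
          fun j => phOf (v.1 j) (v.2 j) • pauliOf (v.1 j) (v.2 j) :=
        funext fun j => Mp_eq_phOf_smul _ _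
      rw [h2, tensorn_smul]
    have hc4 : (c * ∏ j, phOf (v.1 j) (v.2 j)) ^ 4 = 1 := by
      rw [mul_pow, hc, one_mul, ← Finset.prod_pow]
      exact Finset.prod_eq_one fun j _ => phOf_pow _ _
    obtain ⟨ℓ, hℓ⟩ := fourth_root_exists hc4
    refine ⟨x, hx, P, hP, ℓ, fun j => pauliOf (v.1 j) (v.2 j),
      fun j => pauliOf_isPauli _ _, ?_, ?_⟩
    · rw [heq, hTf, smul_smul, ← hℓ]
    · have hset : {j : Fin k | pauliOf (v.1 j) (v.2 j) = PauliX ∨ pauliOf (v.1 j) (v.2 j) = PauliZ}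
          = {j : Fin k | v.1 j + v.2 j = 1} := by
        ext j
        exact pauliOf_XZ_iff _ _
      rw [hset]
      have hcardset : Set.ncard {j : Fin k | v.1 j + v.2 j = 1}
          = (Finset.univ.filter (fun j => v.1 j + v.2 j = 1)).card := by
        rw [Set.ncard_eq_toFinset_card', Set.toFinset_setOf]
      rw [hcardset]
      exact odd_card_of_sum_one (fun j => v.1 j + v.2 j) (by rw [hvx]; exact hsum)
  · left
    push_neg at hodd
    have hzero' : ∀ x ∈ K, ∑ j, ((plabel x).1 j + (plabel x).2 j) = 0 := fun x hx =>
      (zmod2_cases _).resolve_right (hodd x hx)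
    set vY : Vsp k := (fun _ => 1, fun _ => 1) with hvY
    have hWeq : (Bform k).orthogonal W = W := by
      have hle : W ≤ (Bform k).orthogonal W := fun w hw =>
        (LinearMap.BilinForm.mem_orthogonal_iff).mpr fun u hu => hiso u hu w hw
      refine (Submodule.eq_of_le_of_finrank_le hle ?_).symm
      rw [LinearMap.BilinForm.finrank_orthogonal (Bform_nondegenerate k) W,
        hV, hfW]
      omega
    have hvYW : vY ∈ W := by
      rw [← hWeq]
      refine (LinearMap.BilinForm.mem_orthogonal_iff).mpr ?_
      rintro _ ⟨x, hx, rfl⟩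
      show Bform k (plabel x) vY = 0
      rw [Bform_apply]
      have he : ∑ j, ((plabel x).1 j * vY.2 j + (plabel x).2 j * vY.1 j)
          = ∑ j, ((plabel x).1 j + (plabel x).2 j) :=
        Finset.sum_congr rfl fun j _ => by
          show (plabel x).1 j * 1 + (plabel x).2 j * 1 = _
          ring
      rw [he, hzero' x hx]
    obtain ⟨x, hx, hplx⟩ := hvYW
    have hYsq : tensorn k (fun _ => PauliY) * tensorn k (fun _ => PauliY) = 1 := by
      rw [tensorn_mul]
      have h2 : (fun _ : Fin k => PauliY * PauliY) = fun _ => (1 : Matrix (Fin 2) (Fin 2) ℂ) :=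
        funext fun _ => IsSingleQubitPauli.mul_self (Or.inr (Or.inr (Or.inl rfl)))
      rw [h2, tensorn_one]
    refine' ⟨x, hx, _⟩
    let uY : MatU k := ⟨tensorn k (fun _ => PauliY), tensorn k (fun _ => PauliY), hYsq, hYsq⟩
    have hIsP : IsPauli ((uY : QMat k)) :=
      ⟨0, fun _ => PauliY, fun _ => Or.inr (Or.inr (Or.inl rfl)), by
        show tensorn k _ = _
        rw [show ((0 : Fin 4) : ℕ) = 0 from rfl, pow_zero, one_smul]⟩
    refine ⟨⟨uY, Subgroup.subset_closure hIsP⟩, ?_, 0, fun _ => PauliY,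
      fun _ => Or.inr (Or.inr (Or.inl rfl)), ?_, fun _ => Or.inr rfl, ?_⟩
    · apply plabel_injective
      rw [plabel_mk]
      have hlY : labelU (⟨uY, Subgroup.subset_closure hIsP⟩ : ↥(PauliGrp k)) = vY := by
        refine labelU_eq (c := Complex.I ^ k) (pow_ne_zero _ Complex.I_ne_zero) ?_
        show tensorn k (fun _ => PauliY) = _
        have h1 : (fun _ : Fin k => PauliY) = fun j => Complex.I • Mp (vY.1 j) (vY.2 j) :=
          funext fun _ => pauliY_eq
        rw [h1, tensorn_smul, Finset.prod_const, Finset.card_univ, Fintype.card_fin]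
        rfl
      rw [hlY, hplx]
    · show tensorn k _ = _
      rw [show ((0 : Fin 4) : ℕ) = 0 from rfl, pow_zero, one_smul]
    · have huniv : {j : Fin k | (fun _ : Fin k => PauliY) j = PauliY} = Set.univ :=
        Set.eq_univ_of_forall fun _ => rfl
      rw [huniv, Set.ncard_univ, Nat.card_eq_fintype_card, Fintype.card_fin]
      exact hk
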